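/- arXiv:2605.09377 — 3 statements merged into one kernel-verified Lean document; each statement's English description precedes it below -/
import Mathlib

section
/- Let d ≥ 3, β > 0, ξ ∈ (0,1) and σ ∈ (3/4,1). There exist constants T, c > 0 such that for every real t ≥ T and every y ∈ ℤ^d with ‖y‖ ≤ t^σ, one has p_{t − 2 t^ξ}^y ≤ c e^{β² t^ξ} p_t^y. (Lemma 3.5.) -/
open scoped BigOperators

noncomputable section

/-- `q d n z` : the `n`-step transition probability of the discrete-time simple symmetric
random walk on `ℤ^d`, from `0` to `z`. -/
def q (d : ℕ) : ℕ → (Fin d → ℤ) → ℝ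
  | 0, z => if z = 0 then 1 else 0
  | n + 1, z =>
      (1 / (2 * (d : ℝ))) *
        ∑ i : Fin d, (q d n (z - Pi.single i 1) + q d n (z + Pi.single i 1))

/-- Euclidean norm of a point of `ℤ^d`. -/
def eNorm {d : ℕ} (y : Fin d → ℤ) : ℝ :=
  Real.sqrt (∑ i, ((y i : ℝ)) ^ 2)

/-- `p d t y` : the time-`t` transition probability of the rate-1 continuous-time simple
symmetric random walk on `ℤ^d`, from `0` to `y`. -/
def p (d : ℕ) (t : ℝ) (y : Fin d → ℤ) : ℝ :=
  Real.exp (-t) * ∑' n : ℕ, t ^ n / (n.factorial : ℝ) * q d n y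

lemma q_nonneg (d n : ℕ) (z : Fin d → ℤ) : 0 ≤ q d n z := by
  induction n generalizing z with
  | zero => simp [q]; positivity
  | succ n ih =>
      rw [q]
      have : (0:ℝ) ≤ ∑ i : Fin d, (q d n (z - Pi.single i 1) + q d n (z + Pi.single i 1)) :=
        Finset.sum_nonneg fun i _ => add_nonneg (ih _) (ih _)
      positivity

lemma q_le_one (d n : ℕ) (z : Fin d → ℤ) : q d n z ≤ 1 := by
  induction n generalizing z with
  | zero => simp [q]; split <;> norm_num
  | succ n ih =>
      rw [q]
      rcases Nat.eq_zero_or_pos d with hd | hd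
      · subst hd; simp
      have h1 : ∑ i : Fin d, (q d n (z - Pi.single i 1) + q d n (z + Pi.single i 1))
          ≤ ∑ _i : Fin d, (2:ℝ) := by
        refine Finset.sum_le_sum fun i _ => ?_
        have := ih (z - Pi.single i 1); have := ih (z + Pi.single i 1); linarith
      have h3 : (1 / (2 * (d:ℝ))) * ∑ i : Fin d, (q d n (z - Pi.single i 1) + q d n (z + Pi.single i 1))
          ≤ (1 / (2 * (d:ℝ))) * (∑ _i : Fin d, (2:ℝ)) := by
        gcongr
      refine h3.trans (le_of_eq ?_)
      rw [Finset.sum_const, Finset.card_univ, Fintype.card_fin, nsmul_eq_mul]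
      have hd' : (d:ℝ) ≠ 0 := by positivity
      field_simp

def box (d n : ℕ) : Finset (Fin d → ℤ) := Fintype.piFinset fun _ => Finset.Icc (-(n:ℤ)) n

lemma mem_box_iff {d n : ℕ} {z : Fin d → ℤ} : z ∈ box d n ↔ ∀ i, -(n:ℤ) ≤ z i ∧ z i ≤ n := by
  simp [box, Fintype.mem_piFinset]

lemma shift_mem_box {d n : ℕ} {w : Fin d → ℤ} (hw : w ∈ box d n) (i : Fin d) (c : ℤ)
    (hc : c = 1 ∨ c = -1) : w + Pi.single i c ∈ box d (n+1) := by
  rw [mem_box_iff] at hw ⊢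
  intro j
  have := hw j
  have hs : (Pi.single i c : Fin d → ℤ) j = if j = i then c else 0 := Pi.single_apply i c j
  have happ : (w + Pi.single i c : Fin d → ℤ) j = w j + (if j = i then c else 0) := by
    rw [Pi.add_apply, hs]
  rw [happ]
  push_cast
  rcases hc with rfl | rfl <;> split <;> omega

lemma q_eq_zero_of_not_mem_box {d n : ℕ} {z : Fin d → ℤ} (h : z ∉ box d n) : q d n z = 0 := by
  induction n generalizing z with
  | zero =>
      rw [q]
      rw [mem_box_iff] at h
      push_neg at h
      obtain ⟨i, hi⟩ := h
      have : z ≠ 0 := by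
        intro hz; subst hz; simp at hi
      simp [this]
  | succ n ih =>
      rw [q]
      have hz : ∀ i : Fin d, q d n (z - Pi.single i 1) + q d n (z + Pi.single i 1) = 0 := by
        intro i
        have h1 : z - Pi.single i 1 ∉ box d n := by
          intro hmem
          exact h (by simpa using shift_mem_box hmem i 1 (Or.inl rfl))
        have h2 : z + Pi.single i 1 ∉ box d n := by
          intro hmem
          have hmem2 := shift_mem_box hmem i (-1) (Or.inr rfl)
          have heq : z + Pi.single i 1 + Pi.single i (-1) = z := by
            rw [add_assoc, ← Pi.single_add]; simp
          rw [heq] at hmem2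
          exact h hmem2
        rw [ih h1, ih h2, add_zero]
      rw [Finset.sum_congr rfl fun i _ => hz i]
      simp

lemma zero_mem_box (d n : ℕ) : (0 : Fin d → ℤ) ∈ box d n := by
  rw [mem_box_iff]; intro i; simp

lemma sum_q_eq_one (d : ℕ) (hd : 0 < d) (n : ℕ) :
    ∀ S : Finset (Fin d → ℤ), box d n ⊆ S → ∑ z ∈ S, q d n z = 1 := by
  induction n with
  | zero =>
      intro S hS
      have h0 : (0 : Fin d → ℤ) ∈ S := hS (zero_mem_box d 0)
      have : ∀ z : Fin d → ℤ, q d 0 z = if z = 0 then (1:ℝ) else 0 := fun z => by rw [q]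
      rw [Finset.sum_congr rfl fun z _ => this z, Finset.sum_ite_eq' S 0 (fun _ => (1:ℝ))]
      simp [h0]
  | succ n ih =>
      intro S hS
      have key : ∀ (i : Fin d) (c : ℤ), c = 1 ∨ c = -1 →
          ∑ z ∈ S, q d n (z + Pi.single i c) = 1 := by
        intro i c hc
        have hinj : Function.Injective (fun z : Fin d → ℤ => z + Pi.single i c) :=
          add_left_injective _
        rw [← Finset.sum_image (fun x _ y _ h => hinj h)]
        apply ih
        intro w hw
        rw [Finset.mem_image]
        refine ⟨w + Pi.single i (-c), hS ?_, ?_⟩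
        · refine shift_mem_box hw i (-c) ?_
          rcases hc with rfl | rfl
          · right; rfl
          · left; norm_num
        · rw [add_assoc, ← Pi.single_add]
          simp
      have hq : ∀ z : Fin d → ℤ, q d (n+1) z = (1 / (2 * (d : ℝ))) *
          ∑ i : Fin d, (q d n (z - Pi.single i 1) + q d n (z + Pi.single i 1)) :=
        fun z => by rw [q]
      rw [Finset.sum_congr rfl fun z _ => hq z, ← Finset.mul_sum, Finset.sum_comm]
      have : ∀ i : Fin d, ∑ z ∈ S, (q d n (z - Pi.single i 1) + q d n (z + Pi.single i 1))
          = 2 := by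
        intro i
        rw [Finset.sum_add_distrib]
        have h1 : ∑ z ∈ S, q d n (z - Pi.single i 1) = 1 := by
          have := key i (-1) (Or.inr rfl)
          simpa [sub_eq_add_neg, Pi.single_neg] using this
        have h2 := key i 1 (Or.inl rfl)
        rw [h1, h2]; norm_num
      rw [Finset.sum_congr rfl fun i _ => this i]
      rw [Finset.sum_const, Finset.card_univ, Fintype.card_fin, nsmul_eq_mul]
      have hd' : (d:ℝ) ≠ 0 := by positivity
      field_simp

lemma q_symm (d n : ℕ) (z : Fin d → ℤ) : q d n (-z) = q d n z := by
  induction n generalizing z with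
  | zero => rw [q, q]; simp [neg_eq_zero]
  | succ n ih =>
      rw [q, q]
      congr 1
      apply Finset.sum_congr rfl
      intro i _
      have h1 : -z - Pi.single i 1 = -(z + Pi.single i 1) := by ring
      have h2 : -z + Pi.single i 1 = -(z - Pi.single i 1) := by ring
      rw [h1, h2, ih, ih, add_comm]

lemma conv_le (d a : ℕ) : ∀ (b : ℕ) (z : Fin d → ℤ) (S : Finset (Fin d → ℤ)),
    ∑ w ∈ S, q d a w * q d b (z - w) ≤ q d (a + b) z := by
  intro b
  induction b with
  | zero =>
      intro z S
      have hterm : ∀ w ∈ S, q d a w * q d 0 (z - w) = if w = z then q d a w else 0 := by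
        intro w _
        rw [q]
        rcases eq_or_ne w z with rfl | h
        · simp
        · have hz : ¬ (z - w = 0) := by
            rw [sub_eq_zero]; exact fun hh => h hh.symm
          simp [hz, h]
      rw [Finset.sum_congr rfl hterm, Finset.sum_ite_eq' S z (fun w => q d a w), Nat.add_zero]
      split
      · exact le_refl _
      · exact q_nonneg d a z
  | succ b ih =>
      intro z S
      have hq : ∀ (m : ℕ) (y : Fin d → ℤ), q d (m+1) y = (1 / (2 * (d : ℝ))) *
          ∑ i : Fin d, (q d m (y - Pi.single i 1) + q d m (y + Pi.single i 1)) :=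
        fun m y => by rw [q]
      have hnn : (0:ℝ) ≤ 1 / (2 * (d:ℝ)) := by positivity
      calc ∑ w ∈ S, q d a w * q d (b+1) (z - w)
          = ∑ i : Fin d, ∑ w ∈ S, (1 / (2 * (d:ℝ))) *
              (q d a w * q d b ((z - Pi.single i 1) - w)
                + q d a w * q d b ((z + Pi.single i 1) - w)) := by
            rw [Finset.sum_comm]
            apply Finset.sum_congr rfl
            intro w _
            rw [hq b (z - w), Finset.mul_sum, Finset.mul_sum]
            apply Finset.sum_congr rfl
            intro i _
            have e1 : z - w - Pi.single i 1 = z - Pi.single i 1 - w := by ring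
            have e2 : z - w + Pi.single i 1 = z + Pi.single i 1 - w := by ring
            rw [e1, e2]
            ring
        _ ≤ ∑ i : Fin d, (1 / (2 * (d:ℝ))) *
              (q d (a+b) (z - Pi.single i 1) + q d (a+b) (z + Pi.single i 1)) := by
            apply Finset.sum_le_sum
            intro i _
            rw [← Finset.mul_sum]
            apply mul_le_mul_of_nonneg_left _ hnn
            rw [Finset.sum_add_distrib]
            exact add_le_add (ih (z - Pi.single i 1) S) (ih (z + Pi.single i 1) S)
        _ = q d (a + (b+1)) z := by
            rw [show a + (b+1) = (a+b)+1 from rfl, hq (a+b) z, Finset.mul_sum]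

lemma card_box (d m : ℕ) : (box d m).card = (2*m+1)^d := by
  rw [box, Fintype.card_piFinset]
  have : (Finset.Icc (-(m:ℤ)) m).card = 2*m+1 := by
    rw [Int.card_Icc]
    omega
  simp [this]

lemma q_return_lb (d : ℕ) (hd : 0 < d) (m : ℕ) :
    1 ≤ ((2*m+1 : ℕ) : ℝ)^d * q d (2*m) 0 := by
  have h1 : ∑ z ∈ box d m, q d m z = 1 := sum_q_eq_one d hd m (box d m) (le_refl _)
  have h2 : (∑ z ∈ box d m, q d m z)^2 ≤ ((box d m).card : ℝ) * ∑ z ∈ box d m, (q d m z)^2 :=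
    sq_sum_le_card_mul_sum_sq
  have h3 : ∑ z ∈ box d m, (q d m z)^2 ≤ q d (2*m) 0 := by
    have := conv_le d m m (0 : Fin d → ℤ) (box d m)
    rw [show m + m = 2*m by omega] at this
    refine le_trans (le_of_eq ?_) this
    apply Finset.sum_congr rfl
    intro w _
    rw [sq, show (0 : Fin d → ℤ) - w = -w by ring, q_symm]
  have hcard : ((box d m).card : ℝ) = ((2*m+1 : ℕ) : ℝ)^d := by
    rw [card_box]; push_cast; ring
  calc (1:ℝ) = (∑ z ∈ box d m, q d m z)^2 := by rw [h1]; norm_num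
    _ ≤ ((box d m).card : ℝ) * ∑ z ∈ box d m, (q d m z)^2 := h2
    _ ≤ ((2*m+1 : ℕ) : ℝ)^d * q d (2*m) 0 := by
        rw [hcard]
        apply mul_le_mul_of_nonneg_left h3
        positivity

lemma q_mul_le (d m n : ℕ) (y : Fin d → ℤ) : q d m 0 * q d n y ≤ q d (m + n) y := by
  have := conv_le d m n y {0}
  simpa using this

lemma summable_main (d : ℕ) (u : ℝ) (y : Fin d → ℤ) :
    Summable (fun n : ℕ => u^n / n.factorial * q d n y) := by
  apply Summable.of_norm
  apply Summable.of_nonneg_of_le (fun n => norm_nonneg _) (fun n => ?_)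
    (Real.summable_pow_div_factorial |u|)
  rw [norm_mul, norm_div]
  have h1 : ‖q d n y‖ ≤ 1 := by
    rw [Real.norm_of_nonneg (q_nonneg d n y)]; exact q_le_one d n y
  have h2 : ‖u^n‖ / ‖(n.factorial : ℝ)‖ = |u|^n / n.factorial := by
    rw [norm_pow, Real.norm_eq_abs, Real.norm_natCast]
  rw [h2]
  calc |u|^n / n.factorial * ‖q d n y‖ ≤ |u|^n / n.factorial * 1 := by
        apply mul_le_mul_of_nonneg_left h1; positivity
    _ = |u|^n / n.factorial := mul_one _

lemma exp_tsum (u : ℝ) : ∑' n : ℕ, u^n/(n.factorial:ℝ) = Real.exp u := by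
  rw [Real.exp_eq_exp_ℝ, NormedSpace.exp_eq_tsum_div]

lemma cauchy_term (d : ℕ) (u s : ℝ) (hu : 0 ≤ u) (hs : 0 ≤ s) (y : Fin d → ℤ) (N : ℕ) :
    ∑ kl ∈ Finset.HasAntidiagonal.antidiagonal N,
        (u^kl.1 / kl.1.factorial * q d kl.1 0) * (s^kl.2/kl.2.factorial * q d kl.2 y)
      ≤ (u+s)^N / N.factorial * q d N y := by
  have step1 : ∑ kl ∈ Finset.HasAntidiagonal.antidiagonal N,
        (u^kl.1 / kl.1.factorial * q d kl.1 0) * (s^kl.2/kl.2.factorial * q d kl.2 y)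
      ≤ ∑ kl ∈ Finset.HasAntidiagonal.antidiagonal N,
        u^kl.1 * s^kl.2 / (kl.1.factorial * kl.2.factorial) * q d N y := by
    apply Finset.sum_le_sum
    intro kl hkl
    have hNkl : kl.1 + kl.2 = N := Finset.HasAntidiagonal.mem_antidiagonal.mp hkl
    have hq := q_mul_le d kl.1 kl.2 y
    rw [hNkl] at hq
    have hfac : (0:ℝ) ≤ u^kl.1 * s^kl.2 / (kl.1.factorial * kl.2.factorial) := by positivity
    calc (u^kl.1 / kl.1.factorial * q d kl.1 0) * (s^kl.2/kl.2.factorial * q d kl.2 y)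
        = u^kl.1 * s^kl.2 / (kl.1.factorial * kl.2.factorial) * (q d kl.1 0 * q d kl.2 y) := by
          ring
      _ ≤ u^kl.1 * s^kl.2 / (kl.1.factorial * kl.2.factorial) * q d N y := by
          apply mul_le_mul_of_nonneg_left hq hfac
  refine step1.trans (le_of_eq ?_)
  rw [← Finset.sum_mul]
  congr 1
  rw [div_eq_mul_inv, add_pow, Finset.sum_mul,
    ← Finset.Nat.sum_antidiagonal_eq_sum_range_succ
      (fun k l => u ^ k * s ^ l * (N.choose k : ℝ) * ((N.factorial : ℝ))⁻¹)]
  apply Finset.sum_congr rfl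
  intro kl hkl
  have hNkl : kl.1 + kl.2 = N := Finset.HasAntidiagonal.mem_antidiagonal.mp hkl
  have hch : (kl.1.factorial : ℝ) * kl.2.factorial * (N.choose kl.1) = N.factorial := by
    have h := Nat.add_choose_mul_factorial_mul_factorial kl.1 kl.2
    rw [hNkl] at h
    have hsym : N.choose kl.1 = N.choose kl.2 := by
      rw [← Nat.choose_symm (by omega : kl.2 ≤ N), show N - kl.2 = kl.1 by omega]
    rw [hsym]
    push_cast [← h]
    ring
  have h1 : (kl.1.factorial : ℝ) ≠ 0 := Nat.cast_ne_zero.mpr (Nat.factorial_ne_zero _)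
  have h2 : (kl.2.factorial : ℝ) ≠ 0 := Nat.cast_ne_zero.mpr (Nat.factorial_ne_zero _)
  have h3 : (N.factorial : ℝ) ≠ 0 := Nat.cast_ne_zero.mpr (Nat.factorial_ne_zero _)
  field_simp
  rw [← hch]
  ring

lemma tsum_p_nonneg (d : ℕ) (t : ℝ) (ht : 0 ≤ t) (y : Fin d → ℤ) :
    0 ≤ ∑' n : ℕ, t ^ n / (n.factorial : ℝ) * q d n y :=
  tsum_nonneg fun n => mul_nonneg (by positivity) (q_nonneg d n y)

lemma p_nonneg (d : ℕ) (t : ℝ) (ht : 0 ≤ t) (y : Fin d → ℤ) : 0 ≤ p d t y :=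
  mul_nonneg (Real.exp_nonneg _) (tsum_p_nonneg d t ht y)

lemma p_semigroup (d : ℕ) (u s : ℝ) (hu : 0 ≤ u) (hs : 0 ≤ s) (y : Fin d → ℤ) :
    p d u 0 * p d s y ≤ p d (u + s) y := by
  rw [p, p, p]
  have hf := summable_main d u (0 : Fin d → ℤ)
  have hg := summable_main d s y
  have hfn : Summable (fun n => ‖u^n / n.factorial * q d n (0 : Fin d → ℤ)‖) := by
    simp only [Real.norm_eq_abs]; exact hf.abs
  have hgn : Summable (fun n => ‖s^n / n.factorial * q d n y‖) := by
    simp only [Real.norm_eq_abs]; exact hg.abs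
  have hprod := tsum_mul_tsum_eq_tsum_sum_antidiagonal_of_summable_norm hfn hgn
  have e1 : Real.exp (-u) * (∑' n : ℕ, u ^ n / (n.factorial : ℝ) * q d n 0) *
      (Real.exp (-s) * ∑' n : ℕ, s ^ n / (n.factorial : ℝ) * q d n y)
      = Real.exp (-(u+s)) * ((∑' n : ℕ, u ^ n / (n.factorial : ℝ) * q d n 0) *
          ∑' n : ℕ, s ^ n / (n.factorial : ℝ) * q d n y) := by
    rw [show -(u+s) = -u + -s by ring, Real.exp_add]
    ring
  rw [e1, hprod]
  apply mul_le_mul_of_nonneg_left _ (Real.exp_nonneg _)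
  apply Summable.tsum_le_tsum (cauchy_term d u s hu hs y)
  · exact (summable_norm_sum_mul_antidiagonal_of_summable_norm hfn hgn).of_norm
  · exact summable_main d (u+s) y

lemma pow_mul_factorial_le (n k : ℕ) : (n+1)^k * n.factorial ≤ (n+k).factorial := by
  induction k with
  | zero => simp
  | succ k ih =>
      have e : (n+1)^(k+1) * n.factorial = (n+1) * ((n+1)^k * n.factorial) := by ring
      rw [e]
      calc (n+1) * ((n+1)^k * n.factorial) ≤ (n+1) * (n+k).factorial :=
            Nat.mul_le_mul_left _ ih
        _ ≤ (n+k+1) * (n+k).factorial := Nat.mul_le_mul_right _ (by omega)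
        _ = (n+k+1).factorial := (Nat.factorial_succ _).symm

lemma term_le_exp (x : ℝ) (hx : 0 ≤ x) (j : ℕ) : x^j / j.factorial ≤ Real.exp x := by
  rw [← exp_tsum]
  exact Summable.le_tsum (Real.summable_pow_div_factorial x) j (fun n _ => by positivity)

lemma p_zero_lb (d : ℕ) (hd : 0 < d) :
    ∃ U : ℝ, 1 ≤ U ∧ ∀ u : ℝ, U ≤ u → 1 / (4 * u^(2*d)) ≤ p d u 0 := by
  have hdr : (0:ℝ) < 4 * d * 4^d := by positivity
  refine ⟨max 1 (2 * Real.log (4 * d * 4^d)), le_max_left _ _, ?_⟩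
  intro u hu
  have hu1 : (1:ℝ) ≤ u := le_trans (le_max_left _ _) hu
  have hu0 : (0:ℝ) < u := by linarith
  set F : ℕ → ℝ := fun m => u^(2*m) / ((2*m).factorial : ℝ) with hF_def
  have hF : Summable F := (Real.hasSum_cosh u).summable
  set f : ℕ → ℝ := fun m => u^(2*m) / ((2*m+2*d).factorial : ℝ) with hf_def
  set g : ℕ → ℝ := fun n => u^n / (n.factorial : ℝ) * q d n 0 with hg_def
  have hg : Summable g := summable_main d u 0
  have hinj : Function.Injective (fun m : ℕ => 2*m) :=
    fun a b h => Nat.eq_of_mul_eq_mul_left two_pos h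
  have hfle : ∀ m, f m ≤ F m := by
    intro m
    apply div_le_div_of_nonneg_left (by positivity) (by positivity)
    exact_mod_cast Nat.factorial_le (show 2*m ≤ 2*m+2*d by omega)
  have hsf : Summable f :=
    Summable.of_nonneg_of_le (fun m => by positivity) hfle hF
  -- termwise: f m ≤ g (2m)
  have hterm : ∀ m : ℕ, f m ≤ g (2*m) := by
    intro m
    have hq : 1/(((2*m+1:ℕ):ℝ)^d) ≤ q d (2*m) 0 := by
      have h := q_return_lb d hd m
      have hpos : (0:ℝ) < ((2*m+1:ℕ):ℝ)^d := by positivity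
      rw [div_le_iff₀ hpos, mul_comm]
      exact h
    have hfac : ((2*m+1:ℕ):ℝ)^d * ((2*m).factorial : ℝ) ≤ ((2*m+2*d).factorial : ℝ) := by
      have h1 := pow_mul_factorial_le (2*m) d
      have h2 := Nat.factorial_le (show 2*m+d ≤ 2*m+2*d by omega)
      exact_mod_cast le_trans h1 h2
    have hden : (0:ℝ) < ((2*m+1:ℕ):ℝ)^d * ((2*m).factorial : ℝ) := by positivity
    calc f m = u^(2*m) / ((2*m+2*d).factorial : ℝ) := rfl
      _ ≤ u^(2*m) / (((2*m+1:ℕ):ℝ)^d * ((2*m).factorial : ℝ)) :=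
          div_le_div_of_nonneg_left (by positivity) hden hfac
      _ = u^(2*m) / ((2*m).factorial : ℝ) * (1/(((2*m+1:ℕ):ℝ)^d)) := by
          field_simp
      _ ≤ u^(2*m) / ((2*m).factorial : ℝ) * q d (2*m) 0 := by
          apply mul_le_mul_of_nonneg_left hq (by positivity)
      _ = g (2*m) := rfl
  have hA : ∑' m, f m ≤ ∑' n, g n := by
    apply Summable.tsum_le_tsum_of_inj (fun m : ℕ => 2*m) hinj
      (fun c _ => mul_nonneg (by positivity) (q_nonneg d c 0)) hterm hsf hg
  -- identify tsum f
  have hu' : u ≠ 0 := ne_of_gt hu0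
  have hfF : ∀ m, f m = F (m+d) / u^(2*d) := by
    intro m
    simp only [hf_def, hF_def]
    rw [show 2*(m+d) = 2*m+2*d by omega]
    have hfacne : ((2*m+2*d).factorial : ℝ) ≠ 0 := Nat.cast_ne_zero.mpr (Nat.factorial_ne_zero _)
    field_simp
    ring
  have htsum_f : ∑' m, f m = (∑' m, F (m+d)) / u^(2*d) := by
    rw [tsum_congr hfF, tsum_div_const]
  have hcosh : ∑' m, F m = Real.cosh u := by
    rw [hF_def]; exact (Real.cosh_eq_tsum u).symm
  have hpart := Summable.sum_add_tsum_nat_add d hF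
  have hsmall : ∑ i ∈ Finset.range d, F i ≤ (d:ℝ) * (4^d * Real.exp (u/2)) := by
    have hterm2 : ∀ i ∈ Finset.range d, F i ≤ 4^d * Real.exp (u/2) := by
      intro i hi
      have hi' : i ≤ d := le_of_lt (Finset.mem_range.mp hi)
      have h1 : (u/2)^(2*i) / ((2*i).factorial : ℝ) ≤ Real.exp (u/2) :=
        term_le_exp (u/2) (by linarith) (2*i)
      have e4 : F i = 4^i * ((u/2)^(2*i) / ((2*i).factorial : ℝ)) := by
        simp only [hF_def]
        have h2 : ((4:ℝ))^i * (u/2)^(2*i) = u^(2*i) := by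
          rw [div_pow, show ((2:ℝ))^(2*i) = 4^i by rw [pow_mul]; norm_num]
          field_simp
        rw [← h2]
        ring
      calc F i = 4^i * ((u/2)^(2*i) / ((2*i).factorial : ℝ)) := e4
        _ ≤ 4^i * Real.exp (u/2) := by
            apply mul_le_mul_of_nonneg_left h1 (by positivity)
        _ ≤ 4^d * Real.exp (u/2) := by
            apply mul_le_mul_of_nonneg_right _ (Real.exp_nonneg _)
            exact pow_le_pow_right₀ (by norm_num) hi'
    calc ∑ i ∈ Finset.range d, F i ≤ (Finset.range d).card • (4^d * Real.exp (u/2)) :=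
          Finset.sum_le_card_nsmul _ _ _ hterm2
      _ = (d:ℝ) * (4^d * Real.exp (u/2)) := by
          rw [Finset.card_range, nsmul_eq_mul]
  have hcosh_ge : Real.exp u / 2 ≤ Real.cosh u := by
    rw [Real.cosh_eq]
    have := Real.exp_nonneg (-u)
    linarith
  have hthr : (4:ℝ) * d * 4^d ≤ Real.exp (u/2) := by
    have hlog : 2 * Real.log (4*(d:ℝ)*4^d) ≤ u := le_trans (le_max_right _ _) hu
    have h5 : Real.log (4*(d:ℝ)*4^d) ≤ u/2 := by linarith
    calc (4:ℝ)*d*4^d = Real.exp (Real.log (4*(d:ℝ)*4^d)) := (Real.exp_log hdr).symm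
      _ ≤ Real.exp (u/2) := Real.exp_le_exp.mpr h5
  have hsmall2 : (d:ℝ) * (4^d * Real.exp (u/2)) ≤ Real.exp u / 4 := by
    have h2 : Real.exp (u/2) * Real.exp (u/2) = Real.exp u := by
      rw [← Real.exp_add]
      norm_num
    nlinarith [Real.exp_pos (u/2)]
  have htail : Real.exp u / 4 ≤ ∑' m, F (m+d) := by
    have he : ∑' m, F (m+d) = Real.cosh u - ∑ i ∈ Finset.range d, F i := by
      rw [← hcosh]
      linarith [hpart]
    rw [he]
    linarith
  have hupow : (0:ℝ) < u^(2*d) := by positivity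
  have hchain : Real.exp u / 4 / u^(2*d) ≤ ∑' n, g n := by
    calc Real.exp u / 4 / u^(2*d) ≤ (∑' m, F (m+d)) / u^(2*d) := by gcongr
      _ = ∑' m, f m := htsum_f.symm
      _ ≤ ∑' n, g n := hA
  have hp : p d u 0 = Real.exp (-u) * ∑' n, g n := by
    rw [p, hg_def]
  rw [hp]
  calc 1/(4*u^(2*d)) = Real.exp (-u) * (Real.exp u / 4 / u^(2*d)) := by
        rw [Real.exp_neg]
        have := Real.exp_pos u
        field_simp

    _ ≤ Real.exp (-u) * ∑' n, g n :=
        mul_le_mul_of_nonneg_left hchain (Real.exp_nonneg _)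

lemma poly_le_exp (d : ℕ) (b : ℝ) (hb : 0 < b) :
    ∃ X : ℝ, 1 ≤ X ∧ ∀ x : ℝ, X ≤ x → 4*(2*x)^(2*d) ≤ Real.exp (b * x) := by
  have h1 : Filter.Tendsto (fun y : ℝ => Real.exp y / y^(2*d)) Filter.atTop Filter.atTop :=
    Real.tendsto_exp_div_pow_atTop (2*d)
  have h2 : Filter.Tendsto (fun x : ℝ => b * x) Filter.atTop Filter.atTop :=
    Filter.Tendsto.const_mul_atTop hb Filter.tendsto_id
  have h3 := h1.comp h2
  have h4 := h3.eventually_ge_atTop (4*(2/b)^(2*d))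
  rw [Filter.eventually_atTop] at h4
  obtain ⟨X0, hX0⟩ := h4
  refine ⟨max 1 X0, le_max_left _ _, ?_⟩
  intro x hx
  have hx1 : (1:ℝ) ≤ x := le_trans (le_max_left _ _) hx
  have hx0 : (0:ℝ) < x := by linarith
  have h5 := hX0 x (le_trans (le_max_right _ _) hx)
  have hbx : (0:ℝ) < (b*x)^(2*d) := by positivity
  simp only [Function.comp] at h5
  rw [le_div_iff₀ hbx] at h5
  calc 4*(2*x)^(2*d) = 4*(2/b)^(2*d) * (b*x)^(2*d) := by
        rw [mul_assoc, ← mul_pow]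
        congr 2
        field_simp
    _ ≤ Real.exp (b*x) := h5


/-- Lemma 3.5: for `t` large and `‖y‖ ≤ t^σ`, `p_{t-2t^ξ}^y ≤ c e^{β² t^ξ} p_t^y`. -/
theorem stmt5 (d : ℕ) (hd : 3 ≤ d) (β ξ σ : ℝ) (hβ : 0 < β)
    (hξ0 : 0 < ξ) (hξ1 : ξ < 1) (hσ0 : 3 / 4 < σ) (hσ1 : σ < 1) :
    ∃ T c : ℝ, 0 < T ∧ 0 < c ∧
      ∀ t : ℝ, T ≤ t → ∀ y : Fin d → ℤ, eNorm y ≤ t ^ σ →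
        p d (t - 2 * t ^ ξ) y ≤ c * Real.exp (β ^ 2 * t ^ ξ) * p d t y := by
  obtain ⟨U, hU1, hU⟩ := p_zero_lb d (by omega)
  obtain ⟨X, hX1, hX⟩ := poly_le_exp d (β^2) (by positivity)
  set A := max U X with hA_def
  have hA1 : (1:ℝ) ≤ A := le_trans hU1 (le_max_left _ _)
  have hA0 : (0:ℝ) < A := by linarith
  set T := max (max 1 (A ^ (1/ξ))) ((2:ℝ) ^ ((1-ξ)⁻¹)) with hT_def
  have hT1 : (1:ℝ) ≤ T := le_trans (le_max_left 1 _) (le_max_left _ _)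
  refine ⟨T, 1, by linarith, one_pos, ?_⟩
  intro t ht y _
  have ht1 : (1:ℝ) ≤ t := le_trans hT1 ht
  have ht0 : (0:ℝ) < t := by linarith
  -- t^ξ ≥ A
  have hxA : A ≤ t ^ ξ := by
    have h : A^(1/ξ) ≤ t :=
      le_trans (le_trans (le_max_right 1 _) (le_max_left _ _)) ht
    have h2 : (A^(1/ξ))^ξ ≤ t^ξ :=
      Real.rpow_le_rpow (Real.rpow_nonneg hA0.le _) h hξ0.le
    rwa [← Real.rpow_mul hA0.le, one_div_mul_cancel (ne_of_gt hξ0), Real.rpow_one] at h2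
  have hxpos : (0:ℝ) < t ^ ξ := Real.rpow_pos_of_pos ht0 _
  have hx1 : (1:ℝ) ≤ t ^ ξ := le_trans hA1 hxA
  -- t^(1-ξ) ≥ 2
  have ht2 : (2:ℝ) ≤ t ^ (1-ξ) := by
    have h : (2:ℝ)^((1-ξ)⁻¹) ≤ t := le_trans (le_max_right _ _) ht
    have h2 : ((2:ℝ)^((1-ξ)⁻¹))^(1-ξ) ≤ t^(1-ξ) :=
      Real.rpow_le_rpow (Real.rpow_nonneg (by norm_num) _) h (by linarith)
    rwa [← Real.rpow_mul (by norm_num), inv_mul_cancel₀ (by linarith : (1:ℝ)-ξ ≠ 0),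
      Real.rpow_one] at h2
  have hs0 : 0 ≤ t - 2 * t ^ ξ := by
    have hsplit : t ^ ξ * t ^ (1-ξ) = t := by
      rw [← Real.rpow_add ht0]
      norm_num
    nlinarith
  -- semigroup
  have hsem : p d (2 * t ^ ξ) 0 * p d (t - 2 * t ^ ξ) y ≤ p d t y := by
    have := p_semigroup d (2 * t ^ ξ) (t - 2 * t ^ ξ) (by positivity) hs0 y
    rwa [show 2 * t ^ ξ + (t - 2 * t ^ ξ) = t by ring] at this
  have hp0 : 1/(4*(2 * t ^ ξ)^(2*d)) ≤ p d (2 * t ^ ξ) 0 := by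
    apply hU
    calc U ≤ A := le_max_left _ _
      _ ≤ t ^ ξ := hxA
      _ ≤ 2 * t ^ ξ := by linarith
  have hps : 0 ≤ p d (t - 2 * t ^ ξ) y := p_nonneg d _ hs0 y
  have hpt : 0 ≤ p d t y := p_nonneg d t ht0.le y
  have hK : (0:ℝ) < 4*(2 * t ^ ξ)^(2*d) := by positivity
  have h6 : (1/(4*(2 * t ^ ξ)^(2*d))) * p d (t - 2 * t ^ ξ) y ≤ p d t y :=
    le_trans (mul_le_mul_of_nonneg_right hp0 hps) hsem
  have h7 : p d (t - 2 * t ^ ξ) y ≤ p d t y * (4*(2 * t ^ ξ)^(2*d)) := by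
    calc p d (t - 2 * t ^ ξ) y
        = ((1/(4*(2 * t ^ ξ)^(2*d))) * p d (t - 2 * t ^ ξ) y) * (4*(2 * t ^ ξ)^(2*d)) := by
          field_simp
      _ ≤ p d t y * (4*(2 * t ^ ξ)^(2*d)) :=
          mul_le_mul_of_nonneg_right h6 hK.le
  have h8 : 4*(2 * t ^ ξ)^(2*d) ≤ Real.exp (β^2 * t ^ ξ) :=
    hX (t ^ ξ) (le_trans (le_max_right _ _) hxA)
  calc p d (t - 2 * t ^ ξ) y ≤ p d t y * (4*(2 * t ^ ξ)^(2*d)) := h7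
    _ ≤ p d t y * Real.exp (β^2 * t ^ ξ) := mul_le_mul_of_nonneg_left h8 hpt
    _ = 1 * Real.exp (β ^ 2 * t ^ ξ) * p d t y := by ring
end
end

section
/- Let 0 < β < 1. There exists a constant c > 0 such that for all real t ≥ c, all integers l ≥ 0 and all integers r with 1 ≤ r ≤ l + 1: A(t,l,r) ≤ c (l+1)² e^{β² t} β^{2r} t^r · l!/(l+r)!, i.e. A(t,l,r) ≤ c (l+1)² e^{β² t} β^{2r} t^r / ((l+1)(l+2)⋯(l+r)). (Lemma 4.3.) -/
open scoped BigOperators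
open MeasureTheory

noncomputable section

/-- The open simplex `Δ(t,l) = {(t_1,…,t_l) ∈ (0,∞)^l : t_1 + ⋯ + t_l < t}`. -/
def simplexSet (t : ℝ) (l : ℕ) : Set (Fin l → ℝ) :=
  {x | (∀ j, 0 < x j) ∧ ∑ j, x j < t}

/-- Extended coordinates: `t_0 := 0`, `t_j := x_{j-1}` for `1 ≤ j ≤ l`, and
`t_{l+1} := t - (t_1 + ⋯ + t_l)`. -/
def coordExt (t : ℝ) (l : ℕ) (x : Fin l → ℝ) (j : ℕ) : ℝ :=
  if hj : 1 ≤ j ∧ j ≤ l then x ⟨j - 1, by omega⟩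
  else if j = 0 then 0 else t - ∑ i, x i

/-- The simplex integral
`I(t,l,r) = ∫_{Δ(t,l)} ∏_{j=1}^{r-2} (e^{β² t_j} − 1) · e^{β² (t_{r−1} + t_r)} dt_1 ⋯ dt_l`. -/
def Iint (β t : ℝ) (l r : ℕ) : ℝ :=
  ∫ x in simplexSet t l,
    (∏ j ∈ Finset.Icc 1 (r - 2), (Real.exp (β ^ 2 * coordExt t l x j) - 1)) *
      Real.exp (β ^ 2 * (coordExt t l x (r - 1) + coordExt t l x r))

/-- `A(t,l,r) = (l!/t^l) I(t,l,r)` for `l ≥ 1`, and `A(t,0,1) = e^{β² t}`. -/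
def Afun (β t : ℝ) (l r : ℕ) : ℝ :=
  if l = 0 then Real.exp (β ^ 2 * t)
  else (l.factorial : ℝ) / t ^ l * Iint β t l r

def Pcoord (l : ℕ) (x : Fin l → ℝ) (j : ℕ) : ℝ := if h : j < l then x ⟨j, h⟩ else 1

def Wprod (l k : ℕ) (x : Fin l → ℝ) : ℝ := ∏ j ∈ Finset.range k, Pcoord l x j

lemma measurableSet_simplexSet (t : ℝ) (l : ℕ) : MeasurableSet (simplexSet t l) := by
  have h1 : MeasurableSet {x : Fin l → ℝ | ∀ j, 0 < x j} := by
    have : {x : Fin l → ℝ | ∀ j, 0 < x j} = ⋂ j, {x | 0 < x j} := by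
      ext x; simp [Set.mem_iInter]
    rw [this]
    exact MeasurableSet.iInter fun j =>
      measurableSet_lt measurable_const (measurable_pi_apply j)
  have h2 : MeasurableSet {x : Fin l → ℝ | ∑ j, x j < t} :=
    measurableSet_lt (Finset.measurable_sum _ fun i _ => measurable_pi_apply i) measurable_const
  exact h1.inter h2

lemma measurable_Wprod (l k : ℕ) : Measurable (Wprod l k) := by
  apply Finset.measurable_prod
  intro j _
  unfold Pcoord
  split_ifs with h
  · exact measurable_pi_apply _
  · exact measurable_const

lemma Wprod_nonneg {l k : ℕ} {x : Fin l → ℝ} (hx : ∀ i, 0 < x i) : 0 ≤ Wprod l k x := by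
  apply Finset.prod_nonneg
  intro j _
  unfold Pcoord
  split_ifs with h
  · exact (hx _).le
  · norm_num

lemma lint_A (s : ℝ) (hs : 0 < s) (m : ℕ) :
    ∫⁻ u in Set.Ioo 0 s, ENNReal.ofReal ((s - u) ^ m) =
      ENNReal.ofReal (s ^ (m + 1) / (m + 1)) := by
  rw [← ofReal_integral_eq_lintegral_ofReal]
  · congr 1
    have h1 : ∫ u in Set.Ioo 0 s, (s - u) ^ m = ∫ u in (0:ℝ)..s, (s - u) ^ m := by
      rw [intervalIntegral.integral_of_le hs.le, MeasureTheory.integral_Ioc_eq_integral_Ioo]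
    rw [h1, intervalIntegral.integral_comp_sub_left (fun v => v ^ m) s]
    simp [integral_pow]
  · exact (((continuous_const.sub continuous_id).pow m).integrableOn_Icc).mono_set
      Set.Ioo_subset_Icc_self
  · filter_upwards [ae_restrict_mem measurableSet_Ioo] with u hu
    exact pow_nonneg (by linarith [hu.2]) m

lemma lint_B (s : ℝ) (hs : 0 < s) (m : ℕ) :
    ∫⁻ u in Set.Ioo 0 s, ENNReal.ofReal (u * (s - u) ^ m) =
      ENNReal.ofReal (s ^ (m + 2) / ((m + 1) * (m + 2))) := by
  rw [← ofReal_integral_eq_lintegral_ofReal]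
  · congr 1
    have h1 : ∫ u in Set.Ioo 0 s, u * (s - u) ^ m = ∫ u in (0:ℝ)..s, u * (s - u) ^ m := by
      rw [intervalIntegral.integral_of_le hs.le, MeasureTheory.integral_Ioc_eq_integral_Ioo]
    have h2 : ∀ u : ℝ, u * (s - u) ^ m = (fun v => (s - v) * v ^ m) (s - u) := by
      intro u; ring
    rw [h1]
    rw [show (fun u => u * (s - u) ^ m) = (fun u => (fun v => (s - v) * v ^ m) (s - u)) from
      funext h2]
    rw [intervalIntegral.integral_comp_sub_left (fun v => (s - v) * v ^ m) s]
    simp only [sub_self, sub_zero]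
    have h3 : ∀ v : ℝ, (s - v) * v ^ m = s * v ^ m - v ^ (m + 1) := by intro v; ring
    rw [intervalIntegral.integral_congr (g := fun v => s * v ^ m - v ^ (m+1)) (fun v _ => h3 v)]
    rw [intervalIntegral.integral_sub ((intervalIntegral.intervalIntegrable_pow m).const_mul s)
      (intervalIntegral.intervalIntegrable_pow (m+1))]
    rw [intervalIntegral.integral_const_mul, integral_pow, integral_pow]
    have hm1 : ((m:ℝ) + 1) ≠ 0 := by positivity
    have hm2 : ((m:ℝ) + 2) ≠ 0 := by positivity
    field_simp
    push_cast; ring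
  · exact (Continuous.integrableOn_Icc (by continuity)).mono_set
      Set.Ioo_subset_Icc_self
  · filter_upwards [ae_restrict_mem measurableSet_Ioo] with u hu
    exact mul_nonneg hu.1.le (pow_nonneg (by linarith [hu.2]) m)


lemma cons_mem_simplexSet {t : ℝ} {l : ℕ} (u : ℝ) (y : Fin l → ℝ) :
    Fin.cons u y ∈ simplexSet t (l+1) ↔ (∀ i, 0 < y i) ∧ (0 < u ∧ u + ∑ i, y i < t) := by
  constructor
  · rintro ⟨h1, h2⟩
    refine ⟨fun i => by simpa using h1 i.succ, by simpa using h1 0, ?_⟩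
    simpa [Fin.sum_univ_succ] using h2
  · rintro ⟨h1, h2, h3⟩
    refine ⟨fun j => ?_, by simpa [Fin.sum_univ_succ] using h3⟩
    cases j using Fin.cases with
    | zero => simpa using h2
    | succ i => simpa using h1 i

lemma Wprod_cons_zero (l : ℕ) (u : ℝ) (y : Fin l → ℝ) : Wprod (l+1) 0 (Fin.cons u y) = 1 := by
  simp [Wprod]

lemma Wprod_cons_succ (l k : ℕ) (hk : k ≤ l) (u : ℝ) (y : Fin l → ℝ) :
    Wprod (l+1) (k+1) (Fin.cons u y) = u * Wprod l k y := by
  unfold Wprod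
  rw [Finset.prod_range_succ']
  have h0 : Pcoord (l+1) (Fin.cons u y) 0 = u := by
    simp [Pcoord]
  have hsucc : ∀ j ∈ Finset.range k, Pcoord (l+1) (Fin.cons u y) (j+1) = Pcoord l y j := by
    intro j hj
    rw [Finset.mem_range] at hj
    have hjl : j < l := lt_of_lt_of_le hj hk
    unfold Pcoord
    rw [dif_pos (by omega : j + 1 < l + 1), dif_pos hjl]
    have heq : (⟨j+1, by omega⟩ : Fin (l+1)) = Fin.succ ⟨j, hjl⟩ := rfl
    rw [heq, Fin.cons_succ]
  rw [Finset.prod_congr rfl hsucc, h0]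
  ring

lemma step_down (t : ℝ) (l : ℕ) (g : (Fin (l+1) → ℝ) → ENNReal) (hg : Measurable g) :
    ∫⁻ x in simplexSet t (l+1), g x
      = ∫⁻ y : Fin l → ℝ, ∫⁻ u : ℝ, (simplexSet t (l+1)).indicator g (Fin.cons u y) := by
  have hmeas := hg.indicator (measurableSet_simplexSet t (l+1))
  rw [← lintegral_indicator (measurableSet_simplexSet t (l+1))]
  rw [← (MeasurePreserving.symm _ (volume_preserving_piFinSuccAbove (fun _ : Fin (l+1) => ℝ) 0)).lintegral_comp hmeas]
  rw [Measure.volume_eq_prod]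
  rw [lintegral_prod_symm
    (fun z : ℝ × (Fin l → ℝ) => (simplexSet t (l+1)).indicator g
      ((MeasurableEquiv.piFinSuccAbove (fun _ : Fin (l+1) => ℝ) 0).symm z))
    ((hmeas.comp (MeasurableEquiv.measurable _)).aemeasurable)]
  refine lintegral_congr fun y => lintegral_congr fun u => ?_
  congr 1
  simp [MeasurableEquiv.piFinSuccAbove_symm_apply, Fin.insertNth_zero', Fin.consEquiv]

lemma key (t : ℝ) (ht : 0 < t) (l : ℕ) : ∀ k m : ℕ, k ≤ l →
    ∫⁻ x in simplexSet t l, ENNReal.ofReal (Wprod l k x * (t - ∑ i, x i) ^ m)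
      ≤ ENNReal.ofReal (t ^ (l + k + m) * m.factorial / (l + k + m).factorial) := by
  induction l with
  | zero =>
    intro k m hk
    obtain rfl : k = 0 := Nat.le_zero.mp hk
    have hS : simplexSet t 0 = Set.univ := by
      ext x
      simp [simplexSet, ht]
    rw [hS, Measure.restrict_univ]
    have heq : (fun x : Fin 0 → ℝ => ENNReal.ofReal (Wprod 0 0 x * (t - ∑ i, x i) ^ m))
        = fun _ => ENNReal.ofReal (t ^ m) := by
      funext x
      simp [Wprod]
    rw [heq, lintegral_const]
    have hvol : (volume : Measure (Fin 0 → ℝ)) Set.univ = 1 := by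
      simp [volume_pi, Measure.pi_univ]
    rw [hvol, mul_one]
    apply le_of_eq
    congr 1
    have hfac : ((m.factorial : ℝ)) ≠ 0 := Nat.cast_ne_zero.mpr m.factorial_ne_zero
    simp only [Nat.zero_add]
    field_simp
  | succ l ih =>
    intro k m hk
    have hmeasG : Measurable fun x : Fin (l+1) → ℝ =>
        ENNReal.ofReal (Wprod (l+1) k x * (t - ∑ i, x i) ^ m) :=
      ((measurable_Wprod _ _).mul ((measurable_const.sub
        (Finset.measurable_sum _ fun i _ => measurable_pi_apply i)).pow_const m)).ennreal_ofReal
    rw [step_down t l _ hmeasG]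
    rcases k with _ | k'
    · -- k = 0
      have hinner : ∀ y : Fin l → ℝ,
          (∫⁻ u : ℝ, (simplexSet t (l+1)).indicator
              (fun x => ENNReal.ofReal (Wprod (l+1) 0 x * (t - ∑ i, x i) ^ m)) (Fin.cons u y))
            = (simplexSet t l).indicator
              (fun y => ENNReal.ofReal ((1 / ((m:ℝ)+1)) *
                (Wprod l 0 y * (t - ∑ i, y i) ^ (m+1)))) y := by
        intro y
        by_cases hy : y ∈ simplexSet t l
        · obtain ⟨hy1, hy2⟩ := id hy
          have hs : 0 < t - ∑ i, y i := by linarith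
          have hcons : (fun u : ℝ => (simplexSet t (l+1)).indicator
                (fun x => ENNReal.ofReal (Wprod (l+1) 0 x * (t - ∑ i, x i) ^ m)) (Fin.cons u y))
              = fun u => (Set.Ioo (0:ℝ) (t - ∑ i, y i)).indicator
                (fun u => ENNReal.ofReal ((t - ∑ i, y i - u) ^ m)) u := by
            funext u
            by_cases hu : u ∈ Set.Ioo (0:ℝ) (t - ∑ i, y i)
            · rw [Set.indicator_of_mem hu,
                Set.indicator_of_mem ((cons_mem_simplexSet u y).mpr
                  ⟨hy1, hu.1, by linarith [hu.2]⟩)]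
              rw [Wprod_cons_zero, Fin.sum_cons]
              congr 2
              ring
            · have hnot : Fin.cons u y ∉ simplexSet t (l+1) := by
                intro hmem'
                rw [cons_mem_simplexSet] at hmem'
                exact hu ⟨hmem'.2.1, by linarith [hmem'.2.2]⟩
              rw [Set.indicator_of_notMem hu, Set.indicator_of_notMem hnot]
          rw [hcons, lintegral_indicator measurableSet_Ioo, lint_A _ hs m,
            Set.indicator_of_mem hy]
          congr 1
          have hW : Wprod l 0 y = 1 := by simp [Wprod]
          rw [hW]
          have hm1 : ((m:ℝ) + 1) ≠ 0 := by positivity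
          field_simp
        · have h0 : ∀ u : ℝ, (simplexSet t (l+1)).indicator
              (fun x => ENNReal.ofReal (Wprod (l+1) 0 x * (t - ∑ i, x i) ^ m))
                (Fin.cons u y) = 0 := by
            intro u
            apply Set.indicator_of_notMem
            intro hmem'
            rw [cons_mem_simplexSet] at hmem'
            exact hy ⟨hmem'.1, by linarith [hmem'.2.1, hmem'.2.2]⟩
          simp only [h0, lintegral_zero]
          rw [Set.indicator_of_notMem hy]
      simp only [hinner]
      rw [lintegral_indicator (measurableSet_simplexSet t l)]
      rw [lintegral_congr (fun y => by
        rw [ENNReal.ofReal_mul (by positivity : (0:ℝ) ≤ 1 / ((m:ℝ)+1))])]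
      rw [lintegral_const_mul' _ _ ENNReal.ofReal_ne_top]
      calc ENNReal.ofReal (1 / ((m:ℝ)+1)) *
            ∫⁻ y in simplexSet t l, ENNReal.ofReal (Wprod l 0 y * (t - ∑ i, y i) ^ (m+1))
          ≤ ENNReal.ofReal (1 / ((m:ℝ)+1)) *
            ENNReal.ofReal (t ^ (l + 0 + (m+1)) * (m+1).factorial / (l + 0 + (m+1)).factorial) :=
            mul_le_mul_right (ih 0 (m+1) (Nat.zero_le l)) _
        _ = ENNReal.ofReal (t ^ (l + 1 + 0 + m) * m.factorial / (l + 1 + 0 + m).factorial) := by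
            rw [← ENNReal.ofReal_mul (by positivity : (0:ℝ) ≤ 1 / ((m:ℝ)+1))]
            congr 1
            have he : l + 1 + 0 + m = l + 0 + (m + 1) := by omega
            rw [he, Nat.factorial_succ]
            have hm1 : ((m:ℝ) + 1) ≠ 0 := by positivity
            have hfac : (((l + 0 + (m+1)).factorial : ℝ)) ≠ 0 :=
              Nat.cast_ne_zero.mpr (Nat.factorial_ne_zero _)
            push_cast
            field_simp
            try ring
    · -- k = k' + 1
      have hk' : k' ≤ l := by omega
      have hinner : ∀ y : Fin l → ℝ,
          (∫⁻ u : ℝ, (simplexSet t (l+1)).indicator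
              (fun x => ENNReal.ofReal (Wprod (l+1) (k'+1) x * (t - ∑ i, x i) ^ m)) (Fin.cons u y))
            = (simplexSet t l).indicator
              (fun y => ENNReal.ofReal ((1 / (((m:ℝ)+1) * ((m:ℝ)+2))) *
                (Wprod l k' y * (t - ∑ i, y i) ^ (m+2)))) y := by
        intro y
        by_cases hy : y ∈ simplexSet t l
        · obtain ⟨hy1, hy2⟩ := id hy
          have hs : 0 < t - ∑ i, y i := by linarith
          have hWnn : 0 ≤ Wprod l k' y := Wprod_nonneg hy1
          have hcons : (fun u : ℝ => (simplexSet t (l+1)).indicator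
                (fun x => ENNReal.ofReal (Wprod (l+1) (k'+1) x * (t - ∑ i, x i) ^ m)) (Fin.cons u y))
              = fun u => (Set.Ioo (0:ℝ) (t - ∑ i, y i)).indicator
                (fun u => ENNReal.ofReal (Wprod l k' y) *
                  ENNReal.ofReal (u * (t - ∑ i, y i - u) ^ m)) u := by
            funext u
            by_cases hu : u ∈ Set.Ioo (0:ℝ) (t - ∑ i, y i)
            · rw [Set.indicator_of_mem hu,
                Set.indicator_of_mem ((cons_mem_simplexSet u y).mpr
                  ⟨hy1, hu.1, by linarith [hu.2]⟩)]
              rw [Wprod_cons_succ l k' hk', Fin.sum_cons,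
                ← ENNReal.ofReal_mul hWnn]
              congr 1
              ring
            · have hnot : Fin.cons u y ∉ simplexSet t (l+1) := by
                intro hmem'
                rw [cons_mem_simplexSet] at hmem'
                exact hu ⟨hmem'.2.1, by linarith [hmem'.2.2]⟩
              rw [Set.indicator_of_notMem hu, Set.indicator_of_notMem hnot]
          rw [hcons, lintegral_indicator measurableSet_Ioo,
            lintegral_const_mul' _ _ ENNReal.ofReal_ne_top, lint_B _ hs m,
            Set.indicator_of_mem hy]
          rw [← ENNReal.ofReal_mul hWnn]
          congr 1
          have hm1 : ((m:ℝ) + 1) ≠ 0 := by positivity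
          have hm2 : ((m:ℝ) + 2) ≠ 0 := by positivity
          field_simp
          try ring
        · have h0 : ∀ u : ℝ, (simplexSet t (l+1)).indicator
              (fun x => ENNReal.ofReal (Wprod (l+1) (k'+1) x * (t - ∑ i, x i) ^ m))
                (Fin.cons u y) = 0 := by
            intro u
            apply Set.indicator_of_notMem
            intro hmem'
            rw [cons_mem_simplexSet] at hmem'
            exact hy ⟨hmem'.1, by linarith [hmem'.2.1, hmem'.2.2]⟩
          simp only [h0, lintegral_zero]
          rw [Set.indicator_of_notMem hy]
      simp only [hinner]
      rw [lintegral_indicator (measurableSet_simplexSet t l)]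
      rw [lintegral_congr (fun y => by
        rw [ENNReal.ofReal_mul (by positivity : (0:ℝ) ≤ 1 / (((m:ℝ)+1) * ((m:ℝ)+2)))])]
      rw [lintegral_const_mul' _ _ ENNReal.ofReal_ne_top]
      calc ENNReal.ofReal (1 / (((m:ℝ)+1) * ((m:ℝ)+2))) *
            ∫⁻ y in simplexSet t l, ENNReal.ofReal (Wprod l k' y * (t - ∑ i, y i) ^ (m+2))
          ≤ ENNReal.ofReal (1 / (((m:ℝ)+1) * ((m:ℝ)+2))) *
            ENNReal.ofReal (t ^ (l + k' + (m+2)) * (m+2).factorial / (l + k' + (m+2)).factorial) :=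
            mul_le_mul_right (ih k' (m+2) hk') _
        _ = ENNReal.ofReal (t ^ (l + 1 + (k'+1) + m) * m.factorial
              / (l + 1 + (k'+1) + m).factorial) := by
            rw [← ENNReal.ofReal_mul (by positivity : (0:ℝ) ≤ 1 / (((m:ℝ)+1) * ((m:ℝ)+2)))]
            congr 1
            have he : l + 1 + (k'+1) + m = l + k' + (m + 2) := by omega
            rw [he]
            have hfs : (m+2).factorial = (m+2) * ((m+1) * m.factorial) := by
              rw [Nat.factorial_succ, Nat.factorial_succ]
            rw [hfs]
            have hm1 : ((m:ℝ) + 1) ≠ 0 := by positivity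
            have hm2 : ((m:ℝ) + 2) ≠ 0 := by positivity
            have hfac : (((l + k' + (m+2)).factorial : ℝ)) ≠ 0 :=
              Nat.cast_ne_zero.mpr (Nat.factorial_ne_zero _)
            push_cast
            field_simp
            try ring

lemma coordExt_nonneg {t : ℝ} {l : ℕ} {x : Fin l → ℝ} (hx : x ∈ simplexSet t l) (j : ℕ) :
    0 ≤ coordExt t l x j := by
  unfold coordExt
  split_ifs with h1 h2
  · exact (hx.1 _).le
  · exact le_refl 0
  · linarith [hx.2]

lemma sum_coordExt {t : ℝ} {l : ℕ} (x : Fin l → ℝ) :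
    ∑ j ∈ Finset.Icc 1 (l+1), coordExt t l x j = t := by
  have hsplit : Finset.Icc 1 (l+1) = insert (l+1) (Finset.Icc 1 l) := by
    ext a; simp only [Finset.mem_Icc, Finset.mem_insert]; omega
  rw [hsplit, Finset.sum_insert (by simp [Finset.mem_Icc])]
  have hlast : coordExt t l x (l+1) = t - ∑ i, x i := by
    unfold coordExt
    rw [dif_neg (by omega), if_neg (by omega)]
  have himg : Finset.Icc 1 l = (Finset.range l).image (· + 1) := by
    ext a
    simp only [Finset.mem_Icc, Finset.mem_image, Finset.mem_range]
    constructor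
    · rintro ⟨ha1, ha2⟩; exact ⟨a - 1, by omega, by omega⟩
    · rintro ⟨b, hb, rfl⟩; omega
  have hmid : ∑ j ∈ Finset.Icc 1 l, coordExt t l x j = ∑ i, x i := by
    rw [himg, Finset.sum_image (by intro a _ b _ h; simp only at h; omega)]
    rw [← Fin.sum_univ_eq_sum_range (fun j => coordExt t l x (j + 1)) l]
    apply Finset.sum_congr rfl
    intro i _
    unfold coordExt
    rw [dif_pos ⟨by omega, by omega⟩]
    exact congrArg x (Fin.ext (by simp))
  rw [hlast, hmid]
  ring

lemma exp_sub_one_le (a : ℝ) (ha : 0 ≤ a) : Real.exp a - 1 ≤ a * Real.exp a := by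
  have h : 1 - a ≤ Real.exp (-a) := by linarith [Real.add_one_le_exp (-a)]
  have h2 : (1 - a) * Real.exp a ≤ Real.exp (-a) * Real.exp a :=
    mul_le_mul_of_nonneg_right h (Real.exp_pos a).le
  rw [← Real.exp_add] at h2
  simp only [neg_add_cancel, Real.exp_zero] at h2
  nlinarith [h2]

lemma integrand_le (β t : ℝ) (l r : ℕ) (hr1 : 1 ≤ r) (hr2 : r ≤ l + 1)
    (x : Fin l → ℝ) (hx : x ∈ simplexSet t l) :
    (∏ j ∈ Finset.Icc 1 (r - 2), (Real.exp (β ^ 2 * coordExt t l x j) - 1)) *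
      Real.exp (β ^ 2 * (coordExt t l x (r - 1) + coordExt t l x r))
    ≤ β ^ (2 * (r - 2)) * Real.exp (β ^ 2 * t) * Wprod l (r - 2) x := by
  have hT0 : ∀ j, 0 ≤ coordExt t l x j := coordExt_nonneg hx
  have hWnn : 0 ≤ Wprod l (r-2) x := Wprod_nonneg hx.1
  have hsum_le : (∑ j ∈ Finset.Icc 1 (r-2), coordExt t l x j) +
      (coordExt t l x (r-1) + coordExt t l x r) ≤ t := by
    rcases Nat.lt_or_ge r 2 with hr | hr
    · obtain rfl : r = 1 := by omega
      have hempty : Finset.Icc 1 (1-2) = (∅ : Finset ℕ) := by decide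
      rw [hempty, Finset.sum_empty]
      have h0 : coordExt t l x (1-1) = 0 := by
        unfold coordExt
        rw [dif_neg (by omega), if_pos rfl]
      rw [h0]
      have h1 : coordExt t l x 1 ≤ ∑ j ∈ Finset.Icc 1 (l+1), coordExt t l x j :=
        Finset.single_le_sum (fun j _ => hT0 j) (by simp [Finset.mem_Icc])
      rw [sum_coordExt] at h1
      linarith
    · have h1 : (r-1) ∉ insert r (Finset.Icc 1 (r-2)) := by
        simp only [Finset.mem_insert, Finset.mem_Icc]; omega
      have h2 : r ∉ Finset.Icc 1 (r-2) := by
        simp only [Finset.mem_Icc]; omega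
      have hsub : insert (r-1) (insert r (Finset.Icc 1 (r-2))) ⊆ Finset.Icc 1 (l+1) := by
        intro a ha
        simp only [Finset.mem_insert, Finset.mem_Icc] at ha ⊢
        omega
      have hle := Finset.sum_le_sum_of_subset_of_nonneg hsub (fun j _ _ => hT0 j)
      rw [Finset.sum_insert h1, Finset.sum_insert h2, sum_coordExt] at hle
      linarith
  have hWx : ∏ j ∈ Finset.Icc 1 (r-2), coordExt t l x j = Wprod l (r-2) x := by
    have himg : Finset.Icc 1 (r-2) = (Finset.range (r-2)).image (· + 1) := by
      ext a
      simp only [Finset.mem_Icc, Finset.mem_image, Finset.mem_range]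
      constructor
      · rintro ⟨ha1, ha2⟩; exact ⟨a - 1, by omega, by omega⟩
      · rintro ⟨b, hb, rfl⟩; omega
    rw [himg, Finset.prod_image (by intro a _ b _ h; simp only at h; omega)]
    unfold Wprod
    apply Finset.prod_congr rfl
    intro j hj
    rw [Finset.mem_range] at hj
    have hjl : j < l := by omega
    unfold coordExt Pcoord
    rw [dif_pos ⟨by omega, by omega⟩, dif_pos hjl]
    exact congrArg x (Fin.ext (by simp))
  have hprod : (∏ j ∈ Finset.Icc 1 (r-2), (Real.exp (β^2 * coordExt t l x j) - 1))
      ≤ (β^2)^(r-2) * Wprod l (r-2) x *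
        Real.exp (β^2 * ∑ j ∈ Finset.Icc 1 (r-2), coordExt t l x j) := by
    calc ∏ j ∈ Finset.Icc 1 (r-2), (Real.exp (β^2 * coordExt t l x j) - 1)
        ≤ ∏ j ∈ Finset.Icc 1 (r-2),
            (β^2 * coordExt t l x j * Real.exp (β^2 * coordExt t l x j)) := by
          apply Finset.prod_le_prod
          · intro j _
            simp only [sub_nonneg]
            exact Real.one_le_exp (mul_nonneg (sq_nonneg β) (hT0 j))
          · intro j _
            exact exp_sub_one_le _ (mul_nonneg (sq_nonneg β) (hT0 j))
      _ = (β^2)^(r-2) * Wprod l (r-2) x *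
            Real.exp (β^2 * ∑ j ∈ Finset.Icc 1 (r-2), coordExt t l x j) := by
          have hcard : (Finset.Icc 1 (r-2)).card = r - 2 := by
            rw [Nat.card_Icc]
            omega
          rw [Finset.prod_mul_distrib, Finset.prod_mul_distrib, Finset.prod_const,
            ← Real.exp_sum, hWx, hcard, Finset.mul_sum]
  calc (∏ j ∈ Finset.Icc 1 (r - 2), (Real.exp (β ^ 2 * coordExt t l x j) - 1)) *
        Real.exp (β ^ 2 * (coordExt t l x (r - 1) + coordExt t l x r))
      ≤ ((β^2)^(r-2) * Wprod l (r-2) x *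
          Real.exp (β^2 * ∑ j ∈ Finset.Icc 1 (r-2), coordExt t l x j)) *
        Real.exp (β ^ 2 * (coordExt t l x (r - 1) + coordExt t l x r)) :=
        mul_le_mul_of_nonneg_right hprod (Real.exp_pos _).le
    _ = (β^2)^(r-2) * Wprod l (r-2) x *
          Real.exp (β^2 * ((∑ j ∈ Finset.Icc 1 (r-2), coordExt t l x j) +
            (coordExt t l x (r-1) + coordExt t l x r))) := by
        rw [mul_assoc, ← Real.exp_add]
        congr 2
        ring
    _ ≤ (β^2)^(r-2) * Wprod l (r-2) x * Real.exp (β^2 * t) := by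
        apply mul_le_mul_of_nonneg_left _ (mul_nonneg (by positivity) hWnn)
        exact Real.exp_le_exp.mpr (mul_le_mul_of_nonneg_left hsum_le (sq_nonneg β))
    _ = β ^ (2 * (r - 2)) * Real.exp (β ^ 2 * t) * Wprod l (r - 2) x := by
        rw [pow_mul]
        ring

lemma continuous_coordExt (t : ℝ) (l : ℕ) (j : ℕ) :
    Continuous fun x : Fin l → ℝ => coordExt t l x j := by
  unfold coordExt
  split_ifs with h1 h2
  · exact continuous_apply _
  · exact continuous_const
  · exact continuous_const.sub (continuous_finset_sum _ fun i _ => continuous_apply i)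

lemma Iint_le (β t : ℝ) (hβ0 : 0 < β) (ht : 0 < t) (l r : ℕ) (hr1 : 1 ≤ r) (hr2 : r ≤ l + 1) :
    Iint β t l r ≤ β ^ (2*(r-2)) * Real.exp (β^2 * t) *
      (t ^ (l + (r-2)) / ((l + (r-2)).factorial : ℝ)) := by
  have hk : r - 2 ≤ l := by omega
  have hfc : Continuous fun x : Fin l → ℝ =>
      (∏ j ∈ Finset.Icc 1 (r - 2), (Real.exp (β ^ 2 * coordExt t l x j) - 1)) *
        Real.exp (β ^ 2 * (coordExt t l x (r - 1) + coordExt t l x r)) := by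
    apply Continuous.mul
    · apply continuous_finset_prod
      intro j _
      exact (Real.continuous_exp.comp (continuous_const.mul (continuous_coordExt t l j))).sub
        continuous_const
    · exact Real.continuous_exp.comp (continuous_const.mul
        ((continuous_coordExt t l (r-1)).add (continuous_coordExt t l r)))
  have hf0 : 0 ≤ᵐ[volume.restrict (simplexSet t l)] fun x : Fin l → ℝ =>
      (∏ j ∈ Finset.Icc 1 (r - 2), (Real.exp (β ^ 2 * coordExt t l x j) - 1)) *
        Real.exp (β ^ 2 * (coordExt t l x (r - 1) + coordExt t l x r)) := by
    filter_upwards [ae_restrict_mem (measurableSet_simplexSet t l)] with x hx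
    apply mul_nonneg _ (Real.exp_pos _).le
    apply Finset.prod_nonneg
    intro j _
    simp only [sub_nonneg]
    exact Real.one_le_exp (mul_nonneg (sq_nonneg β) (coordExt_nonneg hx j))
  unfold Iint
  rw [integral_eq_lintegral_of_nonneg_ae hf0 hfc.aestronglyMeasurable]
  apply ENNReal.toReal_le_of_le_ofReal (by positivity)
  calc ∫⁻ x in simplexSet t l, ENNReal.ofReal
        ((∏ j ∈ Finset.Icc 1 (r - 2), (Real.exp (β ^ 2 * coordExt t l x j) - 1)) *
          Real.exp (β ^ 2 * (coordExt t l x (r - 1) + coordExt t l x r)))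
      ≤ ∫⁻ x in simplexSet t l,
          ENNReal.ofReal (β^(2*(r-2)) * Real.exp (β^2*t) * Wprod l (r-2) x) := by
        apply lintegral_mono_ae
        filter_upwards [ae_restrict_mem (measurableSet_simplexSet t l)] with x hx
        exact ENNReal.ofReal_le_ofReal (integrand_le β t l r hr1 hr2 x hx)
    _ = ENNReal.ofReal (β^(2*(r-2)) * Real.exp (β^2*t)) *
          ∫⁻ x in simplexSet t l, ENNReal.ofReal (Wprod l (r-2) x) := by
        rw [← lintegral_const_mul' _ _ ENNReal.ofReal_ne_top]
        apply lintegral_congr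
        intro x
        rw [← ENNReal.ofReal_mul (by positivity)]
    _ ≤ ENNReal.ofReal (β^(2*(r-2)) * Real.exp (β^2*t)) *
          ENNReal.ofReal (t^(l+(r-2)) / ((l+(r-2)).factorial : ℝ)) := by
        apply mul_le_mul_right
        have hcongr : ∀ x : Fin l → ℝ, ENNReal.ofReal (Wprod l (r-2) x)
            = ENNReal.ofReal (Wprod l (r-2) x * (t - ∑ i, x i)^0) := by
          intro x
          rw [pow_zero, mul_one]
        rw [lintegral_congr hcongr]
        have hkey := key t ht l (r-2) 0 hk
        simpa using hkey
    _ = ENNReal.ofReal (β^(2*(r-2)) * Real.exp (β^2*t) *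
          (t^(l+(r-2)) / ((l+(r-2)).factorial : ℝ))) := by
        rw [← ENNReal.ofReal_mul (by positivity)]

/-- Lemma 4.3: `A(t,l,r) ≲ (l+1)² e^{β² t} β^{2r} t^r / ((l+1)⋯(l+r))`. -/
theorem stmt7 (β : ℝ) (hβ0 : 0 < β) (hβ1 : β < 1) :
    ∃ c : ℝ, 0 < c ∧
      ∀ t : ℝ, c ≤ t → ∀ l r : ℕ, 1 ≤ r → r ≤ l + 1 →
        Afun β t l r ≤
          c * ((l : ℝ) + 1) ^ 2 * Real.exp (β ^ 2 * t) * β ^ (2 * r) * t ^ r *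
            (l.factorial : ℝ) / ((l + r).factorial : ℝ) := by
  have hβsq : 0 < β ^ 2 := by positivity
  have hβlt : β ^ 2 < 1 := by nlinarith
  refine ⟨2 / β ^ 2, by positivity, ?_⟩
  set c : ℝ := 2 / β ^ 2 with hc
  have hcβ : c * β ^ 2 = 2 := by
    rw [hc]; field_simp
  have hc2 : 2 < c := by
    rw [hc]
    rw [lt_div_iff₀ hβsq]
    nlinarith
  intro t ht l r hr1 hr2
  have ht2 : 2 < t := lt_of_lt_of_le hc2 ht
  have ht0 : 0 < t := by linarith
  have hβt : 2 ≤ β ^ 2 * t := by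
    have := mul_le_mul_of_nonneg_left ht hβsq.le
    rw [hc] at this
    calc (2:ℝ) = β ^ 2 * (2 / β ^ 2) := by field_simp
      _ ≤ β ^ 2 * t := this
  have hfacpos : ∀ n : ℕ, (0:ℝ) < (n.factorial : ℝ) := fun n =>
    Nat.cast_pos.mpr n.factorial_pos
  rcases Nat.eq_zero_or_pos l with hl0 | hlpos
  · -- l = 0, r = 1
    subst hl0
    obtain rfl : r = 1 := by omega
    unfold Afun
    rw [if_pos rfl]
    have h1 : c * (((0:ℕ):ℝ) + 1) ^ 2 * Real.exp (β ^ 2 * t) * β ^ (2 * 1) * t ^ 1 *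
          ((Nat.factorial 0 : ℕ):ℝ) / (((0 + 1 : ℕ).factorial : ℕ):ℝ)
        = c * β ^ 2 * (t * Real.exp (β ^ 2 * t)) := by
      norm_num [Nat.factorial]
      ring
    rw [h1, hcβ]
    nlinarith [Real.exp_pos (β ^ 2 * t), ht2]
  · -- l ≥ 1
    have hl0 : l ≠ 0 := by omega
    unfold Afun
    rw [if_neg hl0]
    have hIle := Iint_le β t hβ0 ht0 l r hr1 hr2
    have hfrac : (0:ℝ) ≤ (l.factorial : ℝ) / t ^ l := by positivity
    have step1 : (l.factorial : ℝ) / t ^ l * Iint β t l r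
        ≤ β ^ (2*(r-2)) * Real.exp (β^2*t) * t^(r-2) * (l.factorial : ℝ)
            / (((l + (r-2)).factorial : ℝ)) := by
      calc (l.factorial : ℝ) / t ^ l * Iint β t l r
          ≤ (l.factorial : ℝ) / t ^ l * (β ^ (2*(r-2)) * Real.exp (β^2 * t) *
              (t ^ (l + (r-2)) / ((l + (r-2)).factorial : ℝ))) :=
            mul_le_mul_of_nonneg_left hIle hfrac
        _ = β ^ (2*(r-2)) * Real.exp (β^2*t) * t^(r-2) * (l.factorial : ℝ)
              / (((l + (r-2)).factorial : ℝ)) := by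
            rw [pow_add]
            have htl : (t:ℝ) ^ l ≠ 0 := by positivity
            have hfl : ((l + (r-2)).factorial : ℝ) ≠ 0 := (hfacpos _).ne'
            field_simp
    refine le_trans step1 ?_
    -- now the arithmetic comparison
    have hKEY : β ^ (2*(r-2)) * t^(r-2) * (((l + r).factorial : ℝ))
        ≤ c * ((l:ℝ)+1)^2 * β^(2*r) * t^r * (((l + (r-2)).factorial : ℝ)) := by
      rcases Nat.lt_or_ge r 2 with hr | hr
      · obtain rfl : r = 1 := by omega
        simp only [show (1:ℕ) - 2 = 0 from rfl, Nat.mul_zero, pow_zero, one_mul,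
          Nat.add_zero, pow_one, mul_one]
        have hfs : ((l + 1).factorial : ℝ) = ((l:ℝ) + 1) * (l.factorial : ℝ) := by
          rw [Nat.factorial_succ]
          push_cast
          ring
        rw [hfs]
        have hl0' : (0:ℝ) ≤ (l:ℝ) := Nat.cast_nonneg l
        have key1 : ((l:ℝ) + 1) ≤ 2 * t * ((l:ℝ) + 1) ^ 2 := by nlinarith
        calc ((l:ℝ) + 1) * (l.factorial : ℝ)
            ≤ (2 * t * ((l:ℝ) + 1) ^ 2) * (l.factorial : ℝ) :=
              mul_le_mul_of_nonneg_right key1 (hfacpos l).le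
          _ = c * ((l:ℝ) + 1) ^ 2 * β ^ (2 * 1) * t * (l.factorial : ℝ) := by
              rw [show (2 * 1 : ℕ) = 2 from rfl]
              linear_combination (-(t * ((l:ℝ) + 1) ^ 2 * (l.factorial : ℝ))) * hcβ
      · obtain ⟨k, rfl⟩ : ∃ k, r = k + 2 := ⟨r - 2, by omega⟩
        have hk2 : (k:ℝ) + 1 ≤ (l:ℝ) := by
          have : k + 1 ≤ l := by omega
          exact_mod_cast this
        simp only [show k + 2 - 2 = k from by omega]
        have hfs : ((l + (k + 2)).factorial : ℝ)
            = ((l:ℝ)+(k:ℝ)+2) * (((l:ℝ)+(k:ℝ)+1) * ((l + k).factorial : ℝ)) := by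
          rw [show l + (k + 2) = (l + k + 1) + 1 from by omega, Nat.factorial_succ,
            Nat.factorial_succ]
          push_cast
          ring
        rw [hfs]
        rw [show 2 * (k + 2) = 2 * k + 4 from by ring, pow_add, pow_add]
        have hcore : ((l:ℝ)+(k:ℝ)+2) * (((l:ℝ)+(k:ℝ)+1)) ≤ c * ((l:ℝ)+1)^2 * β^4 * t^2 := by
          have ha : (l:ℝ)+(k:ℝ)+2 ≤ 2*((l:ℝ)+1) := by linarith
          have hb : (l:ℝ)+(k:ℝ)+1 ≤ 2*((l:ℝ)+1) := by linarith
          have hcb4 : c * β^4 = 2 * β^2 := by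
            rw [hc]; field_simp
          have h4 : (4:ℝ) ≤ 2 * β^2 * t^2 := by
            have := mul_le_mul hβt ht2.le (by norm_num) (by positivity)
            nlinarith [this]
          have hab : ((l:ℝ)+(k:ℝ)+2) * (((l:ℝ)+(k:ℝ)+1)) ≤ (2*((l:ℝ)+1)) * (2*((l:ℝ)+1)) := by
            apply mul_le_mul ha hb (by positivity) (by positivity)
          have heq : c * ((l:ℝ)+1)^2 * β^4 * t^2 = (2*β^2*t^2) * ((l:ℝ)+1)^2 := by
            linear_combination (((l:ℝ)+1)^2 * t^2) * hcb4
          calc ((l:ℝ)+(k:ℝ)+2) * (((l:ℝ)+(k:ℝ)+1))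
              ≤ (2*((l:ℝ)+1)) * (2*((l:ℝ)+1)) := hab
            _ = 4 * ((l:ℝ)+1)^2 := by ring
            _ ≤ (2*β^2*t^2) * ((l:ℝ)+1)^2 :=
                mul_le_mul_of_nonneg_right h4 (sq_nonneg ((l:ℝ)+1))
            _ = c * ((l:ℝ)+1)^2 * β^4 * t^2 := heq.symm
        calc β ^ (2*k) * t^k * (((l:ℝ)+(k:ℝ)+2) * (((l:ℝ)+(k:ℝ)+1) * ((l + k).factorial : ℝ)))
            = (β ^ (2*k) * t^k * ((l + k).factorial : ℝ)) *
                (((l:ℝ)+(k:ℝ)+2) * ((l:ℝ)+(k:ℝ)+1)) := by ring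
          _ ≤ (β ^ (2*k) * t^k * ((l + k).factorial : ℝ)) *
                (c * ((l:ℝ)+1)^2 * β^4 * t^2) := by
              apply mul_le_mul_of_nonneg_left hcore (by positivity)
          _ = c * ((l:ℝ)+1)^2 * (β^(2*k) * β^4) * (t^k * t^2) * ((l + k).factorial : ℝ) := by
              ring
    -- combine
    rw [div_le_div_iff₀ (hfacpos _) (hfacpos _)]
    calc β ^ (2*(r-2)) * Real.exp (β^2*t) * t^(r-2) * (l.factorial : ℝ) * ((l+r).factorial : ℝ)
        = (Real.exp (β^2*t) * (l.factorial : ℝ)) *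
            (β ^ (2*(r-2)) * t^(r-2) * ((l+r).factorial : ℝ)) := by ring
      _ ≤ (Real.exp (β^2*t) * (l.factorial : ℝ)) *
            (c * ((l:ℝ)+1)^2 * β^(2*r) * t^r * ((l + (r-2)).factorial : ℝ)) :=
          mul_le_mul_of_nonneg_left hKEY (by positivity)
      _ = c * ((l:ℝ)+1)^2 * Real.exp (β^2*t) * β^(2*r) * t^r * (l.factorial : ℝ) *
            ((l + (r-2)).factorial : ℝ) := by ring
end
end

section
/- Let ν ∈ (1/2,1), δ ∈ (0,1), ν₀ ∈ (0, δ/2), κ ∈ (0,δ) and κ̂ ∈ (0,ν). There exists c > 0 such that for all real t ≥ c the following two bounds hold: (i) t^{l+r}/(l+r)! ≤ c t^{−1/2} (e/κ)^{δ t} for all integers l, r with 0 ≤ l ≤ ν₀ t and 1 ≤ r ≤ l + 1; (ii) t^l/l! ≤ c t^{−1/2} (e/κ̂)^{ν t} for all integers l with ν₀ t < l ≤ ν t. (Lemma 4.4.) -/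
open scoped BigOperators

lemma fact_lb : ∀ n : ℕ, (n : ℝ) ^ n ≤ Real.exp n * n.factorial := by
  intro n
  induction n with
  | zero => simp
  | succ n ih =>
    have hpos : (0:ℝ) < Real.exp n * n.factorial := by positivity
    rcases Nat.eq_zero_or_pos n with h | h
    · subst h
      have h1e : (1:ℝ) ≤ Real.exp 1 := by nlinarith [Real.add_one_le_exp (1:ℝ)]
      simpa using h1e
    have hn : (1:ℝ) ≤ (n:ℝ) := by exact_mod_cast h
    have hn0 : (0:ℝ) < n := by linarith
    -- (n+1)^n ≤ e * n^n
    have h1 : ((n:ℝ) + 1) ^ n ≤ Real.exp 1 * (n:ℝ) ^ n := by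
      have : ((n:ℝ) + 1) = (n:ℝ) * (1 + 1/n) := by field_simp
      rw [this, mul_pow]
      have h2 : (1 + 1/(n:ℝ)) ^ n ≤ Real.exp 1 := by
        have := Real.add_one_le_exp (1/(n:ℝ))
        calc (1 + 1/(n:ℝ)) ^ n ≤ Real.exp (1/n) ^ n := by
              apply pow_le_pow_left₀ (by positivity) (by linarith)
          _ = Real.exp 1 := by
              rw [← Real.exp_nat_mul]
              congr 1
              field_simp
      calc (n:ℝ)^n * (1+1/(n:ℝ))^n ≤ (n:ℝ)^n * Real.exp 1 := by
            apply mul_le_mul_of_nonneg_left h2 (by positivity)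
        _ = Real.exp 1 * (n:ℝ)^n := by ring
    have h3 : ((n:ℝ) + 1) ^ (n+1) = ((n:ℝ)+1) * ((n:ℝ)+1)^n := by ring
    calc ((n+1 : ℕ) : ℝ) ^ (n+1) = ((n:ℝ)+1) * ((n:ℝ)+1)^n := by push_cast; ring
      _ ≤ ((n:ℝ)+1) * (Real.exp 1 * (n:ℝ)^n) := by
          apply mul_le_mul_of_nonneg_left h1 (by positivity)
      _ ≤ ((n:ℝ)+1) * (Real.exp 1 * (Real.exp n * n.factorial)) := by
          apply mul_le_mul_of_nonneg_left _ (by positivity)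
          exact mul_le_mul_of_nonneg_left ih (Real.exp_pos 1).le
      _ = Real.exp ((n:ℝ)+1) * (((n:ℝ)+1) * n.factorial) := by
          rw [Real.exp_add]; ring
      _ = Real.exp ((n+1:ℕ):ℝ) * ((n+1).factorial : ℝ) := by
          push_cast [Nat.factorial_succ]; ring

lemma key_s9 (a b : ℝ) (ha0 : 0 < a) (ha1 : a ≤ 1) (hb0 : 0 < b) (hba : b < a) :
    ∃ T : ℝ, 1 ≤ T ∧ ∀ t : ℝ, T ≤ t → ∀ n : ℕ, 1 ≤ n → (n : ℝ) ≤ a * t →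
      t ^ n / (n.factorial : ℝ) ≤ t ^ (-(1/2) : ℝ) * (Real.exp 1 / b) ^ (a * t) := by
  set L : ℝ := a * Real.log (a / b) with hL
  have hL0 : 0 < L := by
    apply mul_pos ha0
    apply Real.log_pos
    rw [lt_div_iff₀ hb0]; linarith
  refine ⟨max 1 ((1/L)^2), le_max_left _ _, ?_⟩
  intro t ht n hn hna
  have ht1 : (1:ℝ) ≤ t := le_trans (le_max_left _ _) ht
  have ht0 : (0:ℝ) < t := by linarith
  have hm1 : (1:ℝ) ≤ (n:ℝ) := by exact_mod_cast hn
  have hm0 : (0:ℝ) < (n:ℝ) := by linarith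
  have hs0 : 0 < a * t := by positivity
  have hst : a * t ≤ t := by nlinarith
  -- Step 1 : t^n/n! ≤ exp (n*(1 + log t - log n))
  have step1 : t ^ n / (n.factorial : ℝ) ≤
      Real.exp ((n:ℝ) * (1 + Real.log t - Real.log n)) := by
    have hf := fact_lb n
    have hfpos : (0:ℝ) < (n.factorial : ℝ) := by exact_mod_cast n.factorial_pos
    rw [div_le_iff₀ hfpos]
    have hexp : Real.exp ((n:ℝ) * (1 + Real.log t - Real.log n)) * (n:ℝ)^n
        = Real.exp (n:ℝ) * t ^ n := by
      rw [show ((n:ℝ)) * (1 + Real.log t - Real.log n)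
          = (n:ℝ) + (n:ℝ) * Real.log t - (n:ℝ) * Real.log n by ring,
        Real.exp_sub, Real.exp_add]
      rw [← Real.log_pow, ← Real.log_pow, Real.exp_log (by positivity),
        Real.exp_log (by positivity)]
      field_simp
    have h4 : t ^ n * (n:ℝ)^n ≤ t ^ n * (Real.exp n * n.factorial) := by
      apply mul_le_mul_of_nonneg_left hf (by positivity)
    have hnn : (0:ℝ) < (n:ℝ)^n := by positivity
    rw [← mul_le_mul_iff_of_pos_right hnn]
    calc t ^ n * (n:ℝ)^n ≤ t^n * (Real.exp n * n.factorial) := h4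
      _ = (Real.exp (n:ℝ) * t ^ n) * n.factorial := by ring
      _ = Real.exp ((n:ℝ) * (1 + Real.log t - Real.log n)) * (n:ℝ)^n * n.factorial := by
          rw [hexp]
      _ = Real.exp ((n:ℝ) * (1 + Real.log t - Real.log n)) * (n.factorial:ℝ) * (n:ℝ)^n := by
          ring
  -- Step 2: monotonicity
  have step2 : (n:ℝ) * (1 + Real.log t - Real.log n)
      ≤ (a*t) * (1 + Real.log t - Real.log (a*t)) := by
    have hlog1 : Real.log ((a*t) / n) ≤ (a*t)/n - 1 :=
      Real.log_le_sub_one_of_pos (by positivity)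
    have hlog2 : Real.log ((a*t)/n) = Real.log (a*t) - Real.log n :=
      Real.log_div (ne_of_gt hs0) (ne_of_gt hm0)
    have h6 : (n:ℝ) * (Real.log (a*t) - Real.log n) ≤ a*t - n := by
      rw [← hlog2]
      have := mul_le_mul_of_nonneg_left hlog1 hm0.le
      calc (n:ℝ) * Real.log ((a*t)/n) ≤ (n:ℝ) * ((a*t)/n - 1) := this
        _ = a*t - n := by field_simp
    have h7 : Real.log (a*t) ≤ Real.log t := Real.log_le_log hs0 hst
    have h8 : (n:ℝ) ≤ a*t := hna
    nlinarith [Real.log_nonneg ht1]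
  -- Step 3: (a t)(1+log t - log(a t)) + (1/2) log t ≤ -(1/2) log t's RHS …
  have hrhs : t ^ (-(1/2) : ℝ) * (Real.exp 1 / b) ^ (a * t)
      = Real.exp (Real.log t * (-(1/2)) + (1 - Real.log b) * (a*t)) := by
    rw [Real.rpow_def_of_pos ht0, Real.rpow_def_of_pos (by positivity), ← Real.exp_add]
    congr 2
    rw [Real.log_div (Real.exp_ne_zero 1) (ne_of_gt hb0), Real.log_exp]
  have step3 : (a*t) * (1 + Real.log t - Real.log (a*t))
      ≤ Real.log t * (-(1/2)) + (1 - Real.log b) * (a*t) := by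
    have hlat : Real.log (a*t) = Real.log a + Real.log t :=
      Real.log_mul (ne_of_gt ha0) (ne_of_gt ht0)
    -- reduces to (1/2) log t ≤ t * L
    have hsq : 1/L ≤ Real.sqrt t := by
      have : (1/L)^2 ≤ t := le_trans (le_max_right _ _) ht
      calc 1/L = Real.sqrt ((1/L)^2) := by
            rw [Real.sqrt_sq (by positivity)]
        _ ≤ Real.sqrt t := Real.sqrt_le_sqrt this
    have hsqpos : (0:ℝ) < Real.sqrt t := Real.sqrt_pos.mpr ht0
    have hlt : Real.log t ≤ 2 * Real.sqrt t := by
      have h9 : Real.log (Real.sqrt t) ≤ Real.sqrt t - 1 :=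
        Real.log_le_sub_one_of_pos hsqpos
      have h10 : Real.log t = 2 * Real.log (Real.sqrt t) := by
        conv_lhs => rw [← Real.sq_sqrt ht0.le]
        rw [sq, Real.log_mul (ne_of_gt hsqpos) (ne_of_gt hsqpos)]; ring
      linarith
    have h11 : Real.sqrt t * Real.sqrt t = t := Real.mul_self_sqrt ht0.le
    have h12 : Real.sqrt t ≤ L * t := by
      have := mul_le_mul_of_nonneg_right hsq hsqpos.le
      rw [h11] at this
      calc Real.sqrt t = L * (1/L * Real.sqrt t) := by field_simp
        _ ≤ L * t := by
            apply mul_le_mul_of_nonneg_left _ hL0.le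
            calc 1/L * Real.sqrt t ≤ Real.sqrt t * Real.sqrt t := by
                  exact mul_le_mul_of_nonneg_right hsq hsqpos.le
              _ = t := h11
    have hLd : L = a * Real.log a - a * Real.log b := by
      rw [hL, Real.log_div (ne_of_gt ha0) (ne_of_gt hb0)]; ring
    nlinarith [hlt, h12]
  calc t ^ n / (n.factorial : ℝ)
      ≤ Real.exp ((n:ℝ) * (1 + Real.log t - Real.log n)) := step1
    _ ≤ Real.exp (Real.log t * (-(1/2)) + (1 - Real.log b) * (a*t)) := by
        apply Real.exp_le_exp.mpr; linarith
    _ = t ^ (-(1/2) : ℝ) * (Real.exp 1 / b) ^ (a * t) := hrhs.symm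

/-- Lemma 4.4: elementary factorial bounds. -/
theorem stmt9 (ν δ ν₀ κ κ' : ℝ)
    (hν0 : 1 / 2 < ν) (hν1 : ν < 1) (hδ0 : 0 < δ) (hδ1 : δ < 1)
    (hν₀0 : 0 < ν₀) (hν₀1 : ν₀ < δ / 2)
    (hκ0 : 0 < κ) (hκ1 : κ < δ) (hκ'0 : 0 < κ') (hκ'1 : κ' < ν) :
    ∃ c : ℝ, 0 < c ∧
      ∀ t : ℝ, c ≤ t →
        (∀ l r : ℕ, (l : ℝ) ≤ ν₀ * t → 1 ≤ r → r ≤ l + 1 →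
          t ^ (l + r) / (((l + r).factorial : ℝ)) ≤
            c * t ^ (-(1 / 2) : ℝ) * (Real.exp 1 / κ) ^ (δ * t)) ∧
        (∀ l : ℕ, ν₀ * t < (l : ℝ) → (l : ℝ) ≤ ν * t →
          t ^ l / ((l.factorial : ℝ)) ≤
            c * t ^ (-(1 / 2) : ℝ) * (Real.exp 1 / κ') ^ (ν * t)) := by
  obtain ⟨T₁, hT₁1, hT₁⟩ := key_s9 δ κ hδ0 hδ1.le hκ0 hκ1
  obtain ⟨T₂, hT₂1, hT₂⟩ := key_s9 ν κ' (by linarith) hν1.le hκ'0 hκ'1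
  refine ⟨max (max T₁ T₂) (1/(δ - 2*ν₀)), by positivity, ?_⟩
  set c := max (max T₁ T₂) (1/(δ - 2*ν₀)) with hc
  have hc1 : (1:ℝ) ≤ c := le_trans hT₁1 (le_trans (le_max_left _ _) (le_max_left _ _))
  intro t ht
  have ht0 : (0:ℝ) < t := lt_of_lt_of_le (by linarith) ht
  constructor
  · intro l r hl hr hrl
    have hn1 : 1 ≤ l + r := by omega
    have hna : ((l + r : ℕ) : ℝ) ≤ δ * t := by
      push_cast
      have hrr : (r:ℝ) ≤ (l:ℝ) + 1 := by exact_mod_cast hrl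
      have hδν : 0 < δ - 2*ν₀ := by linarith
      have h1 : 1/(δ - 2*ν₀) ≤ t := le_trans (le_max_right _ _) ht
      have : (1:ℝ) ≤ (δ - 2*ν₀) * t := by
        rw [div_le_iff₀ hδν] at h1; nlinarith
      nlinarith
    have := hT₁ t (le_trans (le_trans (le_max_left _ _) (le_max_left _ _)) ht) (l+r) hn1 hna
    calc t ^ (l + r) / (((l + r).factorial : ℝ))
        ≤ t ^ (-(1/2) : ℝ) * (Real.exp 1 / κ) ^ (δ * t) := this
      _ ≤ c * t ^ (-(1/2) : ℝ) * (Real.exp 1 / κ) ^ (δ * t) := by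
          have hpos : (0:ℝ) ≤ t ^ (-(1/2) : ℝ) * (Real.exp 1 / κ) ^ (δ * t) := by positivity
          nlinarith
  · intro l hl1 hl2
    have hl0 : (0:ℝ) < l := lt_trans (by positivity) hl1
    have hn1 : 1 ≤ l := by exact_mod_cast Nat.one_le_iff_ne_zero.mpr (by
      rintro rfl; simp at hl0)
    have := hT₂ t (le_trans (le_trans (le_max_right _ _) (le_max_left _ _)) ht) l hn1 hl2
    calc t ^ l / ((l.factorial : ℝ))
        ≤ t ^ (-(1/2) : ℝ) * (Real.exp 1 / κ') ^ (ν * t) := this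
      _ ≤ c * t ^ (-(1/2) : ℝ) * (Real.exp 1 / κ') ^ (ν * t) := by
          have hpos : (0:ℝ) ≤ t ^ (-(1/2) : ℝ) * (Real.exp 1 / κ') ^ (ν * t) := by positivity
          nlinarith
end
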